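/- Pull-back of open sets through a bounded monotone family: let c > 0 and let A : 2^{<ℕ} → (measurable subsets of 2^ℕ) satisfy A_τ ⊆ A_σ whenever σ is an initial segment of τ, and λ(A_τ) ≤ c·2^{-|τ|} for every τ. Then for every open set V ⊆ 2^ℕ, λ(⋃{A_τ : [τ] ⊆ V}) ≤ c·λ(V). -/
import Mathlib


open MeasureTheory

/-- The cylinder of infinite binary sequences extending the finite string `σ`. -/
def cyl (σ : List Bool) : Set (ℕ → Bool) :=
  {X | ∀ i, (h : i < σ.length) → X i = σ.get ⟨i, h⟩}

/-- `μ` is the fair-coin measure: each cylinder `[σ]` has measure `2^{-|σ|}`. -/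
def IsFairCoin (μ : Measure (ℕ → Bool)) : Prop :=
  ∀ σ : List Bool, μ (cyl σ) = (1 / 2) ^ σ.length

lemma cyl_measurable (σ : List Bool) : MeasurableSet (cyl σ) := by
  have h : cyl σ = ⋂ i, {X : ℕ → Bool | ∀ h : i < σ.length, X i = σ.get ⟨i, h⟩} := by
    ext X; simp [cyl]
  rw [h]
  apply MeasurableSet.iInter
  intro i
  by_cases h : i < σ.length
  · have : {X : ℕ → Bool | ∀ h : i < σ.length, X i = σ.get ⟨i, h⟩} =
      (fun X : ℕ → Bool => X i) ⁻¹' {σ.get ⟨i, h⟩} := by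
      ext X; simp [h]
    rw [this]
    exact (measurable_pi_apply i) (measurableSet_singleton _)
  · have he : {X : ℕ → Bool | ∀ h : i < σ.length, X i = σ.get ⟨i, h⟩} = Set.univ := by
      ext X; simp [h]
    rw [he]; exact MeasurableSet.univ

lemma prefix_of_mem_cyl {σ τ : List Bool} {X : ℕ → Bool} (hσ : X ∈ cyl σ) (hτ : X ∈ cyl τ)
    (hlen : σ.length ≤ τ.length) : σ <+: τ := by
  rw [List.prefix_iff_eq_take]
  apply List.ext_get
  · simp [Nat.min_eq_left hlen]
  · intro i h1 h2
    have hi : i < σ.length := h1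
    have hiτ : i < τ.length := lt_of_lt_of_le hi hlen
    have e1 := hσ i hi
    have e2 := hτ i hiτ
    simp only [List.get_eq_getElem, List.getElem_take]
    simp only [List.get_eq_getElem] at e1 e2; rw [← e1, ← e2]

lemma cyl_take_mem {τ : List Bool} {X : ℕ → Bool} (hX : X ∈ cyl τ) (n : ℕ) :
    X ∈ cyl (τ.take n) := by
  intro i hi
  have hi' : i < τ.length := by
    have := hi; simp [List.length_take] at this; omega
  have := hX i hi'
  simp only [List.get_eq_getElem, List.getElem_take] at *
  exact this

/-- Pull-back of open sets through a bounded monotone family. -/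
theorem stmt_6 (μ : Measure (ℕ → Bool)) (hμ : IsFairCoin μ)
    (c : ℝ) (hc : 0 < c) (A : List Bool → Set (ℕ → Bool))
    (hmeas : ∀ τ, MeasurableSet (A τ))
    (hmono : ∀ σ τ : List Bool, σ <+: τ → A τ ⊆ A σ)
    (hbound : ∀ τ : List Bool, μ (A τ) ≤ ENNReal.ofReal c * (1 / 2) ^ τ.length)
    (V : Set (ℕ → Bool)) (hV : IsOpen V) :
    μ (⋃ τ ∈ {τ : List Bool | cyl τ ⊆ V}, A τ) ≤ ENNReal.ofReal c * μ V := by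
  classical
  set S : Set (List Bool) := {τ : List Bool | cyl τ ⊆ V} with hS
  set M : Set (List Bool) := {σ | σ ∈ S ∧ ∀ ρ, ρ <+: σ → ρ ∈ S → ρ = σ} with hM
  -- every τ ∈ S has a minimal prefix in M
  have hminpref : ∀ τ ∈ S, ∃ σ ∈ M, σ <+: τ := by
    intro τ hτ
    have hex : ∃ n, τ.take n ∈ S := ⟨τ.length, by simpa using hτ⟩
    let n₀ := Nat.find hex
    refine ⟨τ.take n₀, ⟨Nat.find_spec hex, ?_⟩, List.take_prefix _ _⟩
    intro ρ hρ hρS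
    have hρtake : ρ = τ.take ρ.length := by
      rw [← List.prefix_iff_eq_take]
      exact hρ.trans (List.take_prefix _ _)
    have hlen1 : ρ.length ≤ (τ.take n₀).length := hρ.length_le
    have hlen2 : n₀ ≤ ρ.length := Nat.find_le (by rw [← hρtake]; exact hρS)
    have h3 : (τ.take n₀).length ≤ n₀ := by simp [List.length_take]
    have : ρ.length = (τ.take n₀).length := by omega
    exact hρ.eq_of_length this
  -- union over S ⊆ union over M
  have hsub : (⋃ τ ∈ S, A τ) ⊆ ⋃ σ ∈ M, A σ := by
    intro x hx
    simp only [Set.mem_iUnion] at hx ⊢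
    obtain ⟨τ, hτ, hxτ⟩ := hx
    obtain ⟨σ, hσ, hpre⟩ := hminpref τ hτ
    exact ⟨σ, hσ, hmono σ τ hpre hxτ⟩
  -- M countable
  have hMc : M.Countable := Set.to_countable M
  -- cylinders over M pairwise disjoint
  have hdisj : M.Pairwise (Function.onFun Disjoint cyl) := by
    intro σ hσ τ hτ hne
    rw [Function.onFun, Set.disjoint_left]
    intro X hXσ hXτ
    rcases le_total σ.length τ.length with h | h
    · exact hne (hτ.2 σ (prefix_of_mem_cyl hXσ hXτ h) hσ.1)
    · exact hne ((hσ.2 τ (prefix_of_mem_cyl hXτ hXσ h) hτ.1).symm)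
  calc μ (⋃ τ ∈ S, A τ) ≤ μ (⋃ σ ∈ M, A σ) := measure_mono hsub
    _ ≤ ∑' σ : M, μ (A σ) := measure_biUnion_le μ hMc _
    _ ≤ ∑' σ : M, ENNReal.ofReal c * (1 / 2) ^ (σ : List Bool).length :=
        ENNReal.tsum_le_tsum fun σ => hbound σ
    _ = ENNReal.ofReal c * ∑' σ : M, (1 / 2 : ENNReal) ^ (σ : List Bool).length :=
        ENNReal.tsum_mul_left
    _ = ENNReal.ofReal c * ∑' σ : M, μ (cyl σ) := by
        congr 1; exact tsum_congr fun σ => (hμ σ).symm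
    _ = ENNReal.ofReal c * μ (⋃ σ ∈ M, cyl σ) := by
        rw [measure_biUnion hMc hdisj fun σ _ => cyl_measurable σ]
    _ ≤ ENNReal.ofReal c * μ V := by
        gcongr
        exact Set.iUnion₂_subset fun σ hσ => hσ.1
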